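/- For the magma (ℤ, −) of integers under subtraction, the associative spectrum satisfies s(n) = 2^{n−2} for every n ≥ 2; more precisely, the n-ary regular operations over subtraction are exactly the operations of the form x_1 − x_2 ± x_3 ± ⋯ ± x_n, with every choice of the signs ± occurring. (Paper's Proposition 3.1.) -/

import Mathlib

/-- A bracketing of size `n`: a full binary tree with `n` leaves. -/
inductive Bracketing : ℕ → Type
  | leaf : Bracketing 1
  | node : {k l : ℕ} → Bracketing k → Bracketing l → Bracketing (k + l)

/-- The `n`-ary regular operation induced by a bracketing on a magma `(G, op)`. -/
def Bracketing.eval {G : Type*} (op : G → G → G) : {n : ℕ} → Bracketing n → (Fin n → G) → G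
  | _, .leaf, v => v 0
  | _, .node P Q, v =>
      op (Bracketing.eval op P (fun i => v (Fin.castAdd _ i)))
         (Bracketing.eval op Q (fun i => v (Fin.natAdd _ i)))

/-- The associative spectrum: the number of distinct `n`-ary regular operations. -/
noncomputable def assocSpectrum {G : Type*} (op : G → G → G) (n : ℕ) : ℕ :=
  Nat.card {f : (Fin n → G) → G // ∃ B : Bracketing n, f = Bracketing.eval op B}

/-- The depth of the `i`-th leaf of a bracketing. -/
def Bracketing.depth : {n : ℕ} → Bracketing n → Fin n → ℕ
  | _, .leaf, _ => 0
  | _, .node (k := k) P Q, i =>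
      if h : (i : ℕ) < k then Bracketing.depth P ⟨i, h⟩ + 1
      else Bracketing.depth Q ⟨(i : ℕ) - k, by have := i.isLt; omega⟩ + 1

/-- The right depth of the `i`-th leaf of a bracketing. -/
def Bracketing.rdepth : {n : ℕ} → Bracketing n → Fin n → ℕ
  | _, .leaf, _ => 0
  | _, .node (k := k) P Q, i =>
      if h : (i : ℕ) < k then Bracketing.rdepth P ⟨i, h⟩
      else Bracketing.rdepth Q ⟨(i : ℕ) - k, by have := i.isLt; omega⟩ + 1

/-- The left depth of the `i`-th leaf of a bracketing. -/
def Bracketing.ldepth : {n : ℕ} → Bracketing n → Fin n → ℕ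
  | _, .leaf, _ => 0
  | _, .node (k := k) P Q, i =>
      if h : (i : ℕ) < k then Bracketing.ldepth P ⟨i, h⟩ + 1
      else Bracketing.ldepth Q ⟨(i : ℕ) - k, by have := i.isLt; omega⟩

/-- A magma operation is Catalan if distinct bracketings of equal size
    induce distinct regular operations. -/
def IsCatalanOp {G : Type*} (op : G → G → G) : Prop :=
  ∀ (n : ℕ) (B₁ B₂ : Bracketing n), B₁ ≠ B₂ →
    Bracketing.eval op B₁ ≠ Bracketing.eval op B₂
namespace Bracketing

lemma one_le : ∀ {n : ℕ}, Bracketing n → 1 ≤ n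
  | _, .leaf => le_refl 1
  | _, .node P Q => by have := P.one_le; have := Q.one_le; omega

lemma rdepth_castAdd {k l : ℕ} (P : Bracketing k) (Q : Bracketing l) (i : Fin k) :
    (P.node Q).rdepth (Fin.castAdd l i) = P.rdepth i := by
  simp [rdepth, i.isLt]

lemma rdepth_natAdd {k l : ℕ} (P : Bracketing k) (Q : Bracketing l) (i : Fin l) :
    (P.node Q).rdepth (Fin.natAdd k i) = Q.rdepth i + 1 := by
  simp [rdepth]


lemma rdepth_node_lt {k l : ℕ} (P : Bracketing k) (Q : Bracketing l) (i : Fin (k + l))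
    (h : (i : ℕ) < k) : (P.node Q).rdepth i = P.rdepth ⟨i, h⟩ := by
  simp only [rdepth]; rw [dif_pos h]

lemma rdepth_node_ge {k l : ℕ} (P : Bracketing k) (Q : Bracketing l) (i : Fin (k + l))
    (h : ¬ (i : ℕ) < k) :
    (P.node Q).rdepth i = Q.rdepth ⟨(i : ℕ) - k, by have := i.isLt; omega⟩ + 1 := by
  simp only [rdepth]; rw [dif_neg h]

lemma eval_sub : ∀ {n : ℕ} (B : Bracketing n) (v : Fin n → ℤ),
    B.eval (fun a b => a - b) v = ∑ i, (-1 : ℤ) ^ (B.rdepth i) * v i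
  | _, .leaf, v => by simp [eval, rdepth]
  | _, .node P Q, v => by
    simp only [eval, eval_sub P, eval_sub Q, Fin.sum_univ_add,
      rdepth_castAdd, rdepth_natAdd, pow_succ]
    rw [sub_eq_add_neg, ← Finset.sum_neg_distrib]
    congr 1
    apply Finset.sum_congr rfl
    intro i _
    ring

lemma rdepth_zero : ∀ {n : ℕ} (B : Bracketing n) (h : 0 < n), B.rdepth ⟨0, h⟩ = 0
  | _, .leaf, _ => rfl
  | _, .node P Q, h => by
    have hk := P.one_le
    simp only [rdepth]
    rw [dif_pos (by omega)]
    exact rdepth_zero P (by omega)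

lemma rdepth_one : ∀ {n : ℕ} (B : Bracketing n) (h : 1 < n), B.rdepth ⟨1, h⟩ = 1
  | _, .leaf, h => by omega
  | _, .node (k := k) (l := l) P Q, h => by
    have hk := P.one_le
    have hl := Q.one_le
    by_cases h1 : 1 < k
    · simp only [rdepth]
      rw [dif_pos h1]
      exact rdepth_one P h1
    · simp only [rdepth]
      rw [dif_neg (by omega)]
      have h2 : (1 - k) = 0 := by omega
      have : (⟨1 - k, by omega⟩ : Fin l) = ⟨0, by omega⟩ := by simp only [Fin.mk.injEq]; omega
      rw [this, rdepth_zero Q (by omega)]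

end Bracketing
namespace Bracketing

lemma exists_bracketing : ∀ (n : ℕ) (hn : 0 < n) (ε : Fin n → ℤ),
    (∀ i, ε i = 1 ∨ ε i = -1) → ε ⟨0, hn⟩ = 1 →
    (∀ h1 : 1 < n, ε ⟨1, h1⟩ = -1) →
    ∃ B : Bracketing n, ∀ i, (-1 : ℤ) ^ (B.rdepth i) = ε i := by
  intro n
  induction n using Nat.strong_induction_on with
  | _ n IH =>
    intro hn ε hpm h0 h1
    rcases eq_or_lt_of_le (Nat.succ_le_of_lt hn) with h | hn2
    · -- n = 1
      obtain rfl : n = 1 := h.symm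
      refine ⟨.leaf, fun i => ?_⟩
      have hi : i = ⟨0, hn⟩ := by ext; omega
      rw [hi]
      simpa [rdepth] using h0.symm
    · -- n ≥ 2
      by_cases hlast : ε ⟨n - 1, by omega⟩ = -1
      · -- last sign is -1 : append a leaf on the right
        obtain ⟨m, rfl⟩ : ∃ m, n = m + 1 := ⟨n - 1, by omega⟩
        have hm : 0 < m := by omega
        obtain ⟨B', hB'⟩ := IH m (by omega) hm (fun i => ε (Fin.castAdd 1 i))
          (fun i => hpm _)
          (by show ε (Fin.castAdd 1 ⟨0, hm⟩) = 1; exact h0)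
          (fun hm1 => by show ε (Fin.castAdd 1 ⟨1, hm1⟩) = -1; exact h1 hn2)
        refine ⟨B'.node .leaf, fun i => ?_⟩
        by_cases hik : (i : ℕ) < m
        · rw [rdepth_node_lt B' .leaf i hik]
          have := hB' ⟨i, hik⟩
          rwa [show Fin.castAdd 1 (⟨(i : ℕ), hik⟩ : Fin m) = i from by ext; rfl] at this
        · rw [rdepth_node_ge B' .leaf i hik]
          have h2 : (leaf.rdepth ⟨(i : ℕ) - m, by have := i.isLt; omega⟩) = 0 := rfl
          rw [h2]
          have hi : i = ⟨m + 1 - 1, by omega⟩ := by ext; have := i.isLt; show _ = m + 1 - 1; omega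
          rw [hi, hlast]; norm_num
      · -- last sign is +1 : split at the last -1
        classical
        have hlast1 : ε ⟨n - 1, by omega⟩ = 1 := (hpm _).resolve_right hlast
        have main : ∃ jv, ∃ (hj1 : 1 ≤ jv) (hj2 : jv + 2 ≤ n),
            ε ⟨jv, by omega⟩ = -1 ∧ ∀ m (hm : m < n), jv < m → ε ⟨m, hm⟩ = 1 := by
          have hTne : (Finset.univ.filter (fun i => ε i = -1)).Nonempty :=
            ⟨⟨1, hn2⟩, by simp [h1 hn2]⟩
          obtain ⟨j, hj, hjmax⟩ :
              ∃ j : Fin n, ε j = -1 ∧ ∀ i : Fin n, ε i = -1 → i ≤ j := by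
            refine ⟨_, (Finset.mem_filter.mp ((Finset.univ.filter
              (fun i => ε i = -1)).max'_mem hTne)).2, fun i hi => ?_⟩
            exact Finset.le_max' _ i (by simp [hi])
          have hj1 : 1 ≤ (j : ℕ) := by
            by_contra hc
            have : j = ⟨0, hn⟩ := by ext; show (j : ℕ) = 0; omega
            rw [this, h0] at hj; norm_num at hj
          have hj2 : (j : ℕ) + 2 ≤ n := by
            by_contra hc
            have : j = ⟨n - 1, by omega⟩ := by
              ext; show (j : ℕ) = n - 1; have := j.isLt; omega
            rw [this, hlast1] at hj; norm_num at hj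
          refine ⟨(j : ℕ), hj1, hj2, ?_, ?_⟩
          · have : (⟨(j : ℕ), by omega⟩ : Fin n) = j := by ext; rfl
            rw [this]; exact hj
          · intro m hm hjm
            refine (hpm ⟨m, hm⟩).resolve_right (fun hneg => ?_)
            have := hjmax ⟨m, hm⟩ hneg
            rw [Fin.le_def] at this
            simp only [Fin.val_mk] at this
            omega
        obtain ⟨jv, hj1, hj2, hA, hB⟩ := main
        obtain ⟨l, rfl⟩ : ∃ l, n = jv + l := ⟨n - jv, by omega⟩
        have hl2 : 2 ≤ l := by omega
        obtain ⟨P, hP⟩ := IH jv (by omega) (by omega) (fun i => ε (Fin.castAdd l i))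
          (fun i => hpm _)
          (by show ε (Fin.castAdd l ⟨0, by omega⟩) = 1; exact h0)
          (fun hjj => by show ε (Fin.castAdd l ⟨1, hjj⟩) = -1; exact h1 hn2)
        obtain ⟨Q, hQ⟩ := IH l (by omega) (by omega) (fun i => -ε (Fin.natAdd jv i))
          (fun i => by rcases hpm (Fin.natAdd jv i) with h | h <;> simp [h])
          (by
            show -ε (Fin.natAdd jv ⟨0, by omega⟩) = 1
            have heq : Fin.natAdd jv (⟨0, by omega⟩ : Fin l)
                = (⟨jv, by omega⟩ : Fin (jv + l)) := by ext; simp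
            rw [heq, hA]; norm_num)
          (fun hll => by
            show -ε (Fin.natAdd jv ⟨1, hll⟩) = -1
            have heq : Fin.natAdd jv (⟨1, hll⟩ : Fin l)
                = (⟨jv + 1, by omega⟩ : Fin (jv + l)) := by ext; simp
            rw [heq, hB (jv + 1) (by omega) (by omega)])
        refine ⟨P.node Q, fun i => ?_⟩
        by_cases hik : (i : ℕ) < jv
        · rw [rdepth_node_lt P Q i hik]
          have := hP ⟨i, hik⟩
          rwa [show Fin.castAdd l (⟨(i : ℕ), hik⟩ : Fin jv) = i from by ext; rfl] at this
        · rw [rdepth_node_ge P Q i hik, pow_succ]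
          rw [hQ ⟨(i : ℕ) - jv, by have := i.isLt; omega⟩]
          rw [show Fin.natAdd jv (⟨(i : ℕ) - jv, by have := i.isLt; omega⟩ : Fin l) = i
            from by ext; simp only [Fin.natAdd_mk]; omega]
          ring

end Bracketing

/-- Sign vector determined by a boolean vector: `1, -1`, then `±1` by the booleans. -/
def sgnv (n : ℕ) (b : Fin (n - 2) → Bool) : Fin n → ℤ := fun i =>
  if (i : ℕ) = 0 then 1 else if (i : ℕ) = 1 then -1
  else if h : (i : ℕ) - 2 < n - 2 then (if b ⟨(i : ℕ) - 2, h⟩ then 1 else -1) else 1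

lemma sgnv_pm (n : ℕ) (b : Fin (n - 2) → Bool) (i : Fin n) :
    sgnv n b i = 1 ∨ sgnv n b i = -1 := by
  unfold sgnv; split_ifs <;> simp

lemma sgnv_zero (n : ℕ) (b : Fin (n - 2) → Bool) (h : 0 < n) :
    sgnv n b ⟨0, h⟩ = 1 := by unfold sgnv; norm_num

lemma sgnv_one (n : ℕ) (b : Fin (n - 2) → Bool) (h : 1 < n) :
    sgnv n b ⟨1, h⟩ = -1 := by unfold sgnv; norm_num

lemma sgnv_two (n : ℕ) (b : Fin (n - 2) → Bool) (i : Fin n) (h : 2 ≤ (i : ℕ)) :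
    sgnv n b i = if b ⟨(i : ℕ) - 2, by have := i.isLt; omega⟩ then 1 else -1 := by
  unfold sgnv
  rw [if_neg (by omega), if_neg (by omega), dif_pos (by have := i.isLt; omega)]

open Bracketing

theorem stmt7 (n : ℕ) (hn : 2 ≤ n) :
    assocSpectrum (fun a b : ℤ => a - b) n = 2 ^ (n - 2) ∧
    ∀ f : (Fin n → ℤ) → ℤ,
      (∃ B : Bracketing n, f = Bracketing.eval (fun a b : ℤ => a - b) B) ↔
      (∃ ε : Fin n → ℤ, (∀ i, ε i = 1 ∨ ε i = -1) ∧
        ε ⟨0, by omega⟩ = 1 ∧ ε ⟨1, by omega⟩ = -1 ∧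
        f = fun v => ∑ i, ε i * v i) := by
  classical
  have hiff : ∀ f : (Fin n → ℤ) → ℤ,
      (∃ B : Bracketing n, f = Bracketing.eval (fun a b : ℤ => a - b) B) ↔
      (∃ ε : Fin n → ℤ, (∀ i, ε i = 1 ∨ ε i = -1) ∧
        ε ⟨0, by omega⟩ = 1 ∧ ε ⟨1, by omega⟩ = -1 ∧
        f = fun v => ∑ i, ε i * v i) := by
    intro f
    constructor
    · rintro ⟨B, rfl⟩
      refine ⟨fun i => (-1 : ℤ) ^ (B.rdepth i), fun i => ?_, ?_, ?_, ?_⟩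
      · rcases Nat.even_or_odd (B.rdepth i) with h | h
        · left; exact h.neg_one_pow
        · right; exact h.neg_one_pow
      · show (-1 : ℤ) ^ (B.rdepth ⟨0, by omega⟩) = 1
        rw [rdepth_zero B (by omega)]; norm_num
      · show (-1 : ℤ) ^ (B.rdepth ⟨1, by omega⟩) = -1
        rw [rdepth_one B (by omega)]; norm_num
      · funext v; exact eval_sub B v
    · rintro ⟨ε, hpm, h0, h1, rfl⟩
      obtain ⟨B, hB⟩ := exists_bracketing n (by omega) ε hpm h0 (fun _ => h1)
      refine ⟨B, ?_⟩
      funext v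
      rw [eval_sub B v]
      exact Finset.sum_congr rfl (fun i _ => by rw [hB])
  refine ⟨?_, hiff⟩
  -- counting
  have hg : ∀ b : Fin (n - 2) → Bool,
      ∃ B : Bracketing n, (fun v => ∑ i, sgnv n b i * v i)
        = Bracketing.eval (fun a b : ℤ => a - b) B :=
    fun b => (hiff _).mpr ⟨sgnv n b, sgnv_pm n b, sgnv_zero n b (by omega),
      sgnv_one n b (by omega), rfl⟩
  let g : (Fin (n - 2) → Bool) →
      {f : (Fin n → ℤ) → ℤ // ∃ B : Bracketing n, f = Bracketing.eval (fun a b : ℤ => a - b) B} :=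
    fun b => ⟨fun v => ∑ i, sgnv n b i * v i, hg b⟩
  have hcoef : ∀ (c : Fin n → ℤ) (j : Fin n),
      (∑ i, c i * (if i = j then (1 : ℤ) else 0)) = c j := by
    intro c j
    rw [Finset.sum_eq_single j]
    · simp
    · intro i _ hij; simp [hij]
    · intro h; simp at h
  have hginj : Function.Injective g := by
    intro b b' hbb
    have hfun : ∀ v : Fin n → ℤ, (∑ i, sgnv n b i * v i) = ∑ i, sgnv n b' i * v i :=
      fun v => congrFun (congrArg Subtype.val hbb) v
    have hsg : ∀ j, sgnv n b j = sgnv n b' j := by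
      intro j
      have := hfun (fun i => if i = j then 1 else 0)
      rwa [hcoef, hcoef] at this
    funext j
    have h2 : (2 : ℕ) ≤ ((⟨(j : ℕ) + 2, by have := j.isLt; omega⟩ : Fin n) : ℕ) := by simp
    have := hsg ⟨(j : ℕ) + 2, by have := j.isLt; omega⟩
    rw [sgnv_two n b _ h2, sgnv_two n b' _ h2] at this
    have hj : (⟨((⟨(j : ℕ) + 2, by have := j.isLt; omega⟩ : Fin n) : ℕ) - 2,
        by have := j.isLt; omega⟩ : Fin (n - 2)) = j := by ext; simp
    rw [hj] at this
    by_cases hb : b j <;> by_cases hb' : b' j <;>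
      simp only [hb, hb'] at this ⊢ <;> norm_num at this
  have hgsurj : Function.Surjective g := by
    rintro ⟨f, hf⟩
    obtain ⟨ε, hpm, h0, h1, rfl⟩ := (hiff f).mp hf
    set b : Fin (n - 2) → Bool :=
      fun j => if ε ⟨(j : ℕ) + 2, by have := j.isLt; omega⟩ = 1 then true else false with hbdef
    refine ⟨b, ?_⟩
    apply Subtype.ext
    show (fun v : Fin n → ℤ => ∑ i, sgnv n b i * v i) = fun v : Fin n → ℤ => ∑ i, ε i * v i
    funext v
    refine Finset.sum_congr rfl (fun i _ => ?_)
    congr 1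
    by_cases hi0 : (i : ℕ) = 0
    · have : i = ⟨0, by omega⟩ := by ext; show (i : ℕ) = 0; omega
      rw [this, sgnv_zero n b (by omega), h0]
    · by_cases hi1 : (i : ℕ) = 1
      · have : i = ⟨1, by omega⟩ := by ext; show (i : ℕ) = 1; omega
        rw [this, sgnv_one n b (by omega), h1]
      · have h2 : 2 ≤ (i : ℕ) := by omega
        rw [sgnv_two n b i h2]
        have hb : b ⟨(i : ℕ) - 2, by have := i.isLt; omega⟩
            = if ε ⟨(i : ℕ) - 2 + 2, by have := i.isLt; omega⟩ = 1 then true else false := by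
          rw [hbdef]
        have hidx : (⟨(i : ℕ) - 2 + 2, by have := i.isLt; omega⟩ : Fin n) = i := by
          ext; show (i : ℕ) - 2 + 2 = (i : ℕ); omega
        rw [hidx] at hb
        rcases hpm i with h | h
        · rw [hb, h]; norm_num
        · rw [hb, h]; norm_num
  have hcard := Nat.card_eq_of_bijective g ⟨hginj, hgsurj⟩
  rw [assocSpectrum, ← hcard]
  simp [Nat.card_eq_fintype_card]
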